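/- arXiv:math/0203204 — 4 statements merged into one kernel-verified Lean document; each statement's English description precedes it below -/
import Mathlib

section
/- Let M be a matrix for a propositional language (V(M) may be infinite) and let A₁, …, Aₙ be formulas, none of which is a tautology of M. Then there exists a finite-valued matrix M' for the same language such that: (1) none of A₁, …, Aₙ is a tautology of M'; (2) Taut(M) ⊆ Taut(M'); and (3) the number of truth values of M' is at most ∏ᵢ ξ(Aᵢ), where ξ(Aᵢ) is the number of subformulas of Aᵢ plus 1. -/
/-- Formulas of a propositional language with connectives `C` of arities `ar`. -/
inductive Fml (C : Type) (ar : C → ℕ) : Type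
  | var : ℕ → Fml C ar
  | app : (c : C) → (Fin (ar c) → Fml C ar) → Fml C ar

/-- A matrix for the language: truth values, designated values, truth functions. -/
structure Mat (C : Type) (ar : C → ℕ) where
  V : Type
  desig : Set V
  interp : (c : C) → (Fin (ar c) → V) → V

variable {C : Type} {ar : C → ℕ}

/-- Extension of a valuation to all formulas. -/
def Mat.eval (M : Mat C ar) (I : ℕ → M.V) : Fml C ar → M.V
  | .var n => I n
  | .app c f => M.interp c fun i => M.eval I (f i)

/-- The set of tautologies of a matrix. -/
def Mat.Taut (M : Mat C ar) : Set (Fml C ar) :=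
  {A | ∀ I : ℕ → M.V, M.eval I A ∈ M.desig}

/-- `Subf B A`: `B` is a subformula of `A`. -/
inductive Subf : Fml C ar → Fml C ar → Prop
  | refl (A : Fml C ar) : Subf A A
  | app {B : Fml C ar} {c : C} {f : Fin (ar c) → Fml C ar} (i : Fin (ar c)) :
      Subf B (f i) → Subf B (.app c f)

/-- `ξ(A)` is the number of subformulas of `A`, plus 1. -/
noncomputable def xi (A : Fml C ar) : ℕ := {B | Subf B A}.ncard + 1

theorem Subf.trans' {B A D : Fml C ar} (h1 : Subf B A) (h2 : Subf A D) : Subf B D := by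
  induction h2 with
  | refl => exact h1
  | app i _ ih => exact Subf.app i ih

theorem subf_finite (A : Fml C ar) : {B | Subf B A}.Finite := by
  induction A with
  | var n =>
    apply Set.Finite.subset (Set.finite_singleton (Fml.var n))
    intro B hB
    cases hB with
    | refl => rfl
  | app c f ih =>
    apply Set.Finite.subset (((Set.finite_iUnion ih).insert (Fml.app c f)))
    intro B hB
    cases hB with
    | refl => exact Set.mem_insert _ _
    | app i hi => exact Set.mem_insert_iff.mpr (Or.inr (Set.mem_iUnion.mpr ⟨i, hi⟩))

instance myOptionFinite (α : Type*) [Finite α] : Finite (Option α) := by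
  haveI := Fintype.ofFinite α
  infer_instance


/-- Proposition 2.13: if `A₁, …, Aₙ` are not tautologies of `M`, there is a
finite-valued matrix `M'` in which none of them is a tautology, with
`Taut(M) ⊆ Taut(M')` and at most `∏ᵢ ξ(Aᵢ)` truth values. -/
theorem exists_finite_refuting_cover [Fintype C] (M : Mat C ar) (n : ℕ)
    (A : Fin n → Fml C ar) (h : ∀ i, A i ∉ M.Taut) :
    ∃ M' : Mat C ar, Finite M'.V ∧ (∀ i, A i ∉ M'.Taut) ∧ M.Taut ⊆ M'.Taut ∧
      Nat.card M'.V ≤ ∏ i, xi (A i) := by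
  classical
  have h' : ∀ i, ∃ I : ℕ → M.V, M.eval I (A i) ∉ M.desig := by
    intro i
    by_contra hc
    push_neg at hc
    exact h i hc
  choose I hI using h'
  set S : Fin n → Set M.V := fun i => M.eval (I i) '' {B | Subf B (A i)} with hS
  have hSfin : ∀ i, (S i).Finite := fun i => (subf_finite (A i)).image _
  haveI : ∀ i, Finite ↥(S i) := fun i => (hSfin i).to_subtype
  haveI hFin : Finite (∀ i, Option ↥(S i)) := Pi.finite
  set M' : Mat C ar :=
    { V := ∀ i, Option ↥(S i)
      desig := {v | ∀ i, ∀ x : ↥(S i), v i = some x → (x : M.V) ∈ M.desig}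
      interp := fun c g i =>
        if hall : ∀ j, (g j i).isSome then
          if hv : M.interp c (fun j => (((g j i).get (hall j) : ↥(S i)) : M.V)) ∈ S i then
            some ⟨M.interp c (fun j => (((g j i).get (hall j) : ↥(S i)) : M.V)), hv⟩
          else none
        else none } with hM'
  -- Claim A: some-values of M'.eval agree with M.eval of an extracted valuation
  have claimA : ∀ (Iv : ℕ → M'.V) (i : Fin n) (B : Fml C ar) (x : ↥(S i)),
      M'.eval Iv B i = some x →
      (x : M.V) = M.eval (fun k => ((Iv k i).map Subtype.val).getD (I i k)) B := by
    intro Iv i B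
    induction B with
    | var k =>
      intro x hx
      simp only [Mat.eval] at hx ⊢
      rw [hx]
      rfl
    | app c f ih =>
      intro x hx
      simp only [Mat.eval, hM'] at hx
      change dite _ _ _ = _ at hx
      split at hx
      · next hall =>
        split at hx
        · next hv =>
          rw [Option.some_inj] at hx
          subst hx
          simp only [Mat.eval]
          congr 1
          funext j
          exact ih j _ (Option.some_get (hall j)).symm
        · exact absurd hx (by simp)
      · exact absurd hx (by simp)
  -- Claim B: refuting valuation
  have claimB : ∀ (B : Fml C ar) (j : Fin n) (hsub : Subf B (A j)),
      M'.eval (fun k j' => if hm : I j' k ∈ S j' then some ⟨I j' k, hm⟩ else none) B j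
        = some ⟨M.eval (I j) B, ⟨B, hsub, rfl⟩⟩ := by
    intro B
    induction B with
    | var k =>
      intro j hsub
      have hm : I j k ∈ S j := ⟨Fml.var k, hsub, rfl⟩
      simp only [Mat.eval]
      rw [dif_pos hm]
    | app c f ih =>
      intro j hsub
      have hsub' : ∀ jj, Subf (f jj) (A j) :=
        fun jj => Subf.trans' (Subf.app jj (Subf.refl _)) hsub
      simp only [Mat.eval, hM']
      have hall : ∀ jj, (M'.eval (fun k j' => if hm : I j' k ∈ S j' then some ⟨I j' k, hm⟩ else none) (f jj) j).isSome := by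
        intro jj
        rw [ih jj j (hsub' jj)]
        rfl
      show dite _ _ _ = _
      rw [dif_pos hall]
      have hget : ∀ jj, ((M'.eval (fun k j' => if hm : I j' k ∈ S j' then some ⟨I j' k, hm⟩ else none) (f jj) j).get (hall jj) : M.V) = M.eval (I j) (f jj) := by
        intro jj
        have := ih jj j (hsub' jj)
        simp only [this, Option.get_some]
      have hvals : (fun jj => ((M'.eval (fun k j' => if hm : I j' k ∈ S j' then some ⟨I j' k, hm⟩ else none) (f jj) j).get (hall jj) : M.V)) = fun jj => M.eval (I j) (f jj) := funext hget
      have hv : M.interp c (fun jj => ((M'.eval (fun k j' => if hm : I j' k ∈ S j' then some ⟨I j' k, hm⟩ else none) (f jj) j).get (hall jj) : M.V)) ∈ S j := by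
        rw [hvals]
        exact ⟨Fml.app c f, hsub, rfl⟩
      rw [dif_pos hv]
      congr 1
      apply Subtype.ext
      simp only [hvals]
  refine ⟨M', ?_, ?_, ?_, ?_⟩
  · exact inferInstanceAs (Finite (∀ i, Option ↥(S i)))
  · intro i hTaut
    have := hTaut (fun k j' => if hm : I j' k ∈ S j' then some ⟨I j' k, hm⟩ else none)
    have hc := this i _ (claimB (A i) i (Subf.refl _))
    exact hI i hc
  · intro B hB Iv i x hx
    rw [claimA Iv i B x hx]
    exact hB _
  · have hcard : Nat.card M'.V = ∏ i, (Nat.card ↥(S i) + 1) := by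
      rw [hM']
      rw [Nat.card_pi]
      congr 1
      funext i
      rw [Finite.card_option]
    rw [hcard]
    apply Finset.prod_le_prod'
    intro i _
    have : Nat.card ↥(S i) = (S i).ncard := Nat.card_coe_set_eq (S i)
    rw [this]
    unfold xi
    have h2 : (S i).ncard ≤ {B | Subf B (A i)}.ncard := by
      rw [hS]
      exact Set.ncard_image_le (subf_finite (A i))
    omega
end

section
/- A Hilbert calculus C is strongly sound for a matrix M if and only if Thm(C') ⊆ Taut(M') for every matrix M' and calculus C', where M' is obtained from M by adding truth tables for new connectives (i.e., M' is a matrix over an extended language, with the same truth values and designated values, agreeing with M on the connectives of the original language) and C' is obtained from C by adding arbitrary tautologies of M' as new axioms. -/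
variable {C : Type} {ar : C → ℕ}

/-- Substitution of formulas for variables. -/
def subst (σ : ℕ → Fml C ar) : Fml C ar → Fml C ar
  | .var n => σ n
  | .app c f => .app c fun i => subst σ (f i)

/-- A Hilbert calculus: finitely many axioms and rules (premises, conclusion). -/
structure Calc (C : Type) (ar : C → ℕ) where
  axioms : List (Fml C ar)
  rules : List (List (Fml C ar) × Fml C ar)

/-- Theorems of a Hilbert calculus. -/
inductive Thm (K : Calc C ar) : Fml C ar → Prop
  | ax {A : Fml C ar} (σ : ℕ → Fml C ar) : A ∈ K.axioms → Thm K (subst σ A)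
  | rule {r : List (Fml C ar) × Fml C ar} (σ : ℕ → Fml C ar) :
      r ∈ K.rules → (∀ B ∈ r.1, Thm K (subst σ B)) → Thm K (subst σ r.2)

/-- `M` is normal for `K` (`K` is strongly sound for `M`; `M` is a cover of `K`). -/
def NormalFor (M : Mat C ar) (K : Calc C ar) : Prop :=
  (∀ A ∈ K.axioms, A ∈ M.Taut) ∧
  ∀ r ∈ K.rules, ∀ I : ℕ → M.V,
    (∀ B ∈ r.1, M.eval I B ∈ M.desig) → M.eval I r.2 ∈ M.desig

/-- Embedding of formulas of the original language into the language extended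
by new connectives `D` (with arities `arD`). -/
def injFml {D : Type} {arD : D → ℕ} : Fml C ar → Fml (C ⊕ D) (Sum.elim ar arD)
  | .var n => .var n
  | .app c f => .app (Sum.inl c) fun i => injFml (f i)

/-- The matrix `M'` obtained from `M` by adding truth tables `g` for the new
connectives `D`: same truth values, same designated values, and the truth
functions agree with those of `M` on the old connectives. -/
def extMat {D : Type} {arD : D → ℕ} (M : Mat C ar)
    (g : (d : D) → (Fin (arD d) → M.V) → M.V) : Mat (C ⊕ D) (Sum.elim ar arD) where
  V := M.V
  desig := M.desig
  interp := fun c => match c with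
    | .inl c => M.interp c
    | .inr d => g d

/-- The calculus `C'` obtained from `K` by adding the formulas in `L`
(of the extended language) as new axioms. -/
def extCalc {D : Type} {arD : D → ℕ} (K : Calc C ar)
    (L : List (Fml (C ⊕ D) (Sum.elim ar arD))) : Calc (C ⊕ D) (Sum.elim ar arD) where
  axioms := K.axioms.map injFml ++ L
  rules := K.rules.map fun r => (r.1.map injFml, injFml r.2)

theorem subst_var (A : Fml C ar) : subst Fml.var A = A := by
  induction A with
  | var n => rfl
  | app c f ih => exact congrArg _ (funext ih)

theorem eval_subst (M : Mat C ar) (I : ℕ → M.V) (σ : ℕ → Fml C ar) (A : Fml C ar) :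
    M.eval I (subst σ A) = M.eval (fun n => M.eval I (σ n)) A := by
  induction A with
  | var n => rfl
  | app c f ih => exact congrArg _ (funext ih)

theorem eval_inj {D : Type} {arD : D → ℕ} (M : Mat C ar)
    (g : (d : D) → (Fin (arD d) → M.V) → M.V) (I : ℕ → M.V) (A : Fml C ar) :
    (extMat M g).eval I (injFml A) = M.eval I A := by
  induction A with
  | var n => rfl
  | app c f ih => exact congrArg _ (funext ih)

/-- Proposition 3.2: `K` is strongly sound for `M` iff `Thm(C') ⊆ Taut(M')`
for every matrix `M'` obtained from `M` by adding truth tables for new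
connectives and every calculus `C'` obtained from `K` by adding tautologies
of `M'` as new axioms. -/
theorem stronglySound_iff (M : Mat C ar) (K : Calc C ar) :
    NormalFor M K ↔
      ∀ (D : Type) (arD : D → ℕ) (g : (d : D) → (Fin (arD d) → M.V) → M.V)
        (L : List (Fml (C ⊕ D) (Sum.elim ar arD))),
        (∀ A ∈ L, A ∈ (extMat M g).Taut) →
        ∀ F, Thm (extCalc K L) F → F ∈ (extMat M g).Taut := by
  constructor
  · intro hN D arD g L hL F hF
    induction hF with
    | ax σ hA =>
      rename_i A
      rcases List.mem_append.mp hA with hA | hA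
      · rcases List.mem_map.mp hA with ⟨A0, hA0, rfl⟩
        intro I
        rw [eval_subst]
        erw [eval_inj]
        exact hN.1 A0 hA0 _
      · intro I
        rw [eval_subst]
        exact hL A hA _
    | rule σ hr hprem ih =>
      rcases List.mem_map.mp hr with ⟨r0, hr0, rfl⟩
      intro I
      dsimp only
      rw [eval_subst]
      erw [eval_inj]
      apply hN.2 r0 hr0
      intro B hB
      have := ih (injFml B) (List.mem_map.mpr ⟨B, hB, rfl⟩) I
      rw [eval_subst] at this
      erw [eval_inj] at this
      exact this
  · intro h
    constructor
    · intro A hA I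
      have hthm : Thm (extCalc K ([] : List (Fml (C ⊕ Empty) (Sum.elim ar (fun _ => 0))))) (injFml A) := by
        have hax : (injFml A : Fml (C ⊕ Empty) (Sum.elim ar (fun _ => 0))) ∈
            (extCalc K ([] : List (Fml (C ⊕ Empty) (Sum.elim ar (fun _ => 0))))).axioms :=
          List.mem_append.mpr (Or.inl (List.mem_map.mpr ⟨A, hA, rfl⟩))
        have := Thm.ax Fml.var hax
        rwa [subst_var] at this
      have := h Empty (fun _ => 0) (fun d => d.elim) [] (by simp) _ hthm I
      rwa [eval_inj] at this
    · intro r hr I hprem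
      set σ : ℕ → Fml (C ⊕ ℕ) (Sum.elim ar (fun _ => 0)) :=
        fun n => .app (Sum.inr n) (fun i => i.elim0) with hσ
      have key : ∀ (J : ℕ → M.V) (B : Fml C ar),
          (extMat M (fun n (_ : Fin 0 → M.V) => I n)).eval J (subst σ (injFml B)) = M.eval I B := by
        intro J B
        erw [eval_subst, eval_inj]
        rfl
      set L : List (Fml (C ⊕ ℕ) (Sum.elim ar (fun _ => 0))) :=
        r.1.map (fun B => subst σ (injFml B)) with hLdef
      have hL : ∀ A ∈ L, A ∈ (extMat M (fun n (_ : Fin 0 → M.V) => I n)).Taut := by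
        intro A hA J
        rcases List.mem_map.mp hA with ⟨B, hB, rfl⟩
        erw [key]
        exact hprem B hB
      have hthm : Thm (extCalc K L) (subst σ (injFml r.2)) := by
        have hrmem : (r.1.map injFml, injFml r.2) ∈ (extCalc K L).rules :=
          List.mem_map.mpr ⟨r, hr, rfl⟩
        apply Thm.rule (r := (r.1.map injFml, injFml r.2)) σ hrmem
        intro B' hB'
        rcases List.mem_map.mp hB' with ⟨B, hB, rfl⟩
        have hax : subst σ (injFml B) ∈ (extCalc K L).axioms :=
          List.mem_append.mpr (Or.inr (List.mem_map.mpr ⟨B, hB, rfl⟩))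
        have := Thm.ax (K := extCalc K L) Fml.var hax
        rwa [subst_var] at this
      have := h ℕ (fun _ => 0) (fun n _ => I n) L hL _ hthm I
      rwa [key] at this
end

section
/- Given two finite-valued matrices M₁ and M₂ for the same propositional language (with finite sets of truth values, decidable designated sets, and computable truth functions), it is decidable whether Taut(M₁) ⊆ Taut(M₂); consequently, it is decidable whether Taut(M₁) = Taut(M₂) and whether M₁ is better than M₂ (i.e., Taut(M₁) ⊊ Taut(M₂)). -/
variable {C : Type} {ar : C → ℕ}

/-- A numerical encoding of the designated values of an `(m+1)`-valued matrix. -/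
def encDes (m : ℕ) (des : Fin (m + 1) → Bool) : ℕ :=
  Encodable.encode (List.ofFn fun i => des i)

/-- A numerical encoding of the truth functions of an `(m+1)`-valued matrix:
for each connective, the full truth table. -/
noncomputable def encInterp [Fintype C] [Encodable C] (m : ℕ)
    (intp : (c : C) → (Fin (ar c) → Fin (m + 1)) → Fin (m + 1)) : ℕ :=
  Encodable.encode ((Finset.univ : Finset C).toList.map fun c =>
    Nat.pair (Encodable.encode c)
      (Encodable.encode (List.ofFn fun j : Fin ((m + 1) ^ ar c) =>
        (intp c fun i =>
          (⟨j.val / (m + 1) ^ i.val % (m + 1),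
            Nat.mod_lt _ (Nat.succ_pos m)⟩ : Fin (m + 1))).val)))

/-- A numerical encoding of an `(m+1)`-valued matrix. -/
noncomputable def encMat [Fintype C] [Encodable C] (m : ℕ)
    (des : Fin (m + 1) → Bool)
    (intp : (c : C) → (Fin (ar c) → Fin (m + 1)) → Fin (m + 1)) : ℕ :=
  Nat.pair m (Nat.pair (encDes m des) (encInterp m intp))



namespace TautDec

/-- digits-to-number (Horner): `horner b [x0,...,x(K-1)] = Σ xi * b^i`. -/
def horner (b : ℕ) (l : List ℕ) : ℕ := l.foldr (fun x acc => x + b * acc) 0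

@[simp] lemma horner_nil (b : ℕ) : horner b [] = 0 := rfl
@[simp] lemma horner_cons (b x : ℕ) (l : List ℕ) :
    horner b (x :: l) = x + b * horner b l := rfl

lemma horner_lt {b : ℕ} {l : List ℕ} (hb : 0 < b) (h : ∀ x ∈ l, x < b) :
    horner b l < b ^ l.length := by
  induction l with
  | nil => simpa using hb
  | cons x l ih =>
    have hx : x < b := h x (by simp)
    have hl : horner b l < b ^ l.length := ih fun y hy => h y (by simp [hy])
    calc x + b * horner b l < b + b * horner b l := by omega
      _ = b * (horner b l + 1) := by ring
      _ ≤ b * b ^ l.length := by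
          exact Nat.mul_le_mul_left b hl
      _ = b ^ (x :: l).length := by rw [List.length_cons]; ring

lemma horner_digit {b : ℕ} {l : List ℕ} (h : ∀ x ∈ l, x < b) :
    ∀ i < l.length, horner b l / b ^ i % b = l.getD i 0 := by
  induction l with
  | nil => simp
  | cons x l ih =>
    intro i hi
    have hx : x < b := h x (by simp)
    have hb : 0 < b := Nat.pos_of_ne_zero (by omega)
    cases i with
    | zero =>
      simp [Nat.add_mul_mod_self_left, Nat.mod_eq_of_lt hx]
    | succ i =>
      have hdiv : (x + b * horner b l) / b = horner b l := by
        rw [Nat.add_mul_div_left _ _ hb, Nat.div_eq_of_lt hx, Nat.zero_add]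
      have : horner b (x :: l) / b ^ (i + 1) = horner b l / b ^ i := by
        rw [pow_succ', ← Nat.div_div_eq_div_mul, horner_cons, hdiv]
      rw [this]
      exact ih (fun y hy => h y (by simp [hy])) i (by simpa using hi)

lemma getD_map_range {K i : ℕ} (f : ℕ → ℕ) (hi : i < K) :
    ((List.range K).map f).getD i 0 = f i := by
  rw [List.getD_eq_getElem?_getD]
  simp [List.getElem?_map, List.getElem?_range hi]

lemma getD_ofFn {K i : ℕ} (f : Fin K → ℕ) (hi : i < K) :
    (List.ofFn f).getD i 0 = f ⟨i, hi⟩ := by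
  rw [List.getD_eq_getElem?_getD]
  simp [List.getElem?_ofFn, hi]

lemma getD_ofFn' {α : Type} {K i : ℕ} (f : Fin K → α) (d : α) (hi : i < K) :
    (List.ofFn f).getD i d = f ⟨i, hi⟩ := by
  rw [List.getD_eq_getElem?_getD]
  simp [List.getElem?_ofFn, hi]

end TautDec

namespace TautDec

open Primrec

/-! ### The decision algorithm, on plain natural numbers -/

def dlist (e : ℕ) : List Bool :=
  (Encodable.decode (α := List Bool) e.unpair.2.unpair.1).getD []

def tbl (e k : ℕ) : List ℕ :=
  (Encodable.decode (α := List ℕ)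
    (((Encodable.decode (α := List ℕ) e.unpair.2.unpair.2).getD []).foldr
      (fun p r => if p.unpair.1 = k then p.unpair.2 else r) 0)).getD []

def k1 (n : ℕ) : ℕ := n.unpair.1.unpair.1 + 1
def k2 (n : ℕ) : ℕ := n.unpair.2.unpair.1 + 1
def TT (n : ℕ) : ℕ := k1 n ^ k2 n
def NP (n : ℕ) : ℕ := k1 n ^ TT n * k2 n

def digit (b x i : ℕ) : ℕ := x / b ^ i % b

def gens (n : ℕ) : List ℕ :=
  (List.range (k2 n)).map fun v =>
    Nat.pair (horner (k1 n) ((List.range (TT n)).map fun t => digit (k1 n) t v)) v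

def tuples : ℕ → List ℕ → List (List ℕ)
  | 0, _ => [[]]
  | a + 1, R => (tuples a R).flatMap fun l => R.map fun x => x :: l

def opc (n a kc : ℕ) (ws : List ℕ) : ℕ :=
  Nat.pair
    (horner (k1 n) ((List.range (TT n)).map fun t =>
      (tbl n.unpair.1 kc).getD
        (horner (k1 n) ((List.range a).map fun i =>
          digit (k1 n) (ws.getD i 0).unpair.1 t)) 0))
    ((tbl n.unpair.2 kc).getD
      (horner (k2 n) ((List.range a).map fun i => (ws.getD i 0).unpair.2)) 0)

def stepc (n a kc : ℕ) (R : List ℕ) : List ℕ :=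
  R ++ (tuples a R).map (opc n a kc)

def allb (p : ℕ → Bool) (l : List ℕ) : Bool := l.foldr (fun x b => p x && b) true

lemma allb_iff (p : ℕ → Bool) (l : List ℕ) :
    allb p l = true ↔ ∀ x ∈ l, p x = true := by
  induction l with
  | nil => simp [allb]
  | cons x l ih => simp [allb, List.foldr] at *; tauto

def goodb (n p : ℕ) : Bool :=
  !(allb (fun t => (dlist n.unpair.1).getD (digit (k1 n) p.unpair.1 t) false)
      (List.range (TT n)))
    || (dlist n.unpair.2).getD p.unpair.2 false

/-! ### Primrec proofs -/

lemma primrec_pow : Primrec₂ ((· ^ ·) : ℕ → ℕ → ℕ) :=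
  Primrec₂.unpaired'.1 Nat.Primrec.pow

lemma primrec_horner : Primrec₂ horner := by
  have h : Primrec fun q : ℕ × List ℕ =>
      q.2.foldr (fun x acc => x + q.1 * acc) 0 :=
    Primrec.list_foldr (h := fun (q : ℕ × List ℕ) (p : ℕ × ℕ) => p.1 + q.1 * p.2)
      Primrec.snd (Primrec.const 0)
      ((Primrec.nat_add.comp (Primrec.fst.comp Primrec.snd)
        (Primrec.nat_mul.comp (Primrec.fst.comp Primrec.fst)
          (Primrec.snd.comp Primrec.snd))).to₂)
  exact h.to₂

lemma primrec_k1 : Primrec k1 :=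
  Primrec.succ.comp (Primrec.fst.comp (Primrec.unpair.comp (Primrec.fst.comp Primrec.unpair)))

lemma primrec_k2 : Primrec k2 :=
  Primrec.succ.comp (Primrec.fst.comp (Primrec.unpair.comp (Primrec.snd.comp Primrec.unpair)))

lemma primrec_TT : Primrec TT := primrec_pow.comp primrec_k1 primrec_k2

lemma primrec_NP : Primrec NP :=
  Primrec.nat_mul.comp (primrec_pow.comp primrec_k1 primrec_TT) primrec_k2

lemma primrec_digit : Primrec fun q : ℕ × ℕ × ℕ => digit q.1 q.2.1 q.2.2 :=
  Primrec.nat_mod.comp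
    (Primrec.nat_div.comp (Primrec.fst.comp Primrec.snd)
      (primrec_pow.comp Primrec.fst (Primrec.snd.comp Primrec.snd)))
    Primrec.fst

lemma primrec_dlist : Primrec dlist :=
  Primrec.option_getD.comp
    (Primrec.decode.comp
      (Primrec.fst.comp (Primrec.unpair.comp (Primrec.snd.comp Primrec.unpair))))
    (Primrec.const [])

lemma primrec_tbl : Primrec₂ tbl := by
  have hfold : Primrec fun q : ℕ × ℕ =>
      ((Encodable.decode (α := List ℕ) q.1.unpair.2.unpair.2).getD []).foldr
        (fun p r => if p.unpair.1 = q.2 then p.unpair.2 else r) 0 := by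
    refine Primrec.list_foldr
      (h := fun (q : ℕ × ℕ) (p : ℕ × ℕ) =>
        if p.1.unpair.1 = q.2 then p.1.unpair.2 else p.2)
      (Primrec.option_getD.comp
        (Primrec.decode.comp
          (Primrec.snd.comp (Primrec.unpair.comp
            (Primrec.snd.comp (Primrec.unpair.comp Primrec.fst)))))
        (Primrec.const [])) (Primrec.const 0) ?_
    have hh : Primrec fun q : (ℕ × ℕ) × ℕ × ℕ =>
        if q.2.1.unpair.1 = q.1.2 then q.2.1.unpair.2 else q.2.2 :=
      Primrec.ite
        (Primrec.eq.comp
          (Primrec.fst.comp (Primrec.unpair.comp (Primrec.fst.comp Primrec.snd)))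
          (Primrec.snd.comp Primrec.fst))
        (Primrec.snd.comp (Primrec.unpair.comp (Primrec.fst.comp Primrec.snd)))
        (Primrec.snd.comp Primrec.snd)
    exact hh.to₂
  exact (Primrec.option_getD.comp (Primrec.decode.comp hfold) (Primrec.const [])).to₂

lemma primrec_gens : Primrec gens := by
  have hg : Primrec fun q : ℕ × ℕ =>
      Nat.pair (horner (k1 q.1) ((List.range (TT q.1)).map fun t => digit (k1 q.1) t q.2))
        q.2 := by
    refine Primrec₂.natPair.comp ?_ Primrec.snd
    refine primrec_horner.comp (primrec_k1.comp Primrec.fst) ?_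
    refine Primrec.list_map (Primrec.list_range.comp (primrec_TT.comp Primrec.fst)) ?_
    exact (primrec_digit.comp (Primrec.pair
      (primrec_k1.comp (Primrec.fst.comp Primrec.fst))
      (Primrec.pair Primrec.snd (Primrec.snd.comp Primrec.fst)))).to₂
  exact Primrec.list_map (Primrec.list_range.comp primrec_k2) hg.to₂

lemma primrec_tuples (a : ℕ) : Primrec (tuples a) := by
  induction a with
  | zero => exact Primrec.const [[]]
  | succ a ih =>
    have h : Primrec fun R : List ℕ => (tuples a R).flatMap fun l => R.map fun x => x :: l := by
      refine Primrec.list_flatMap ih ?_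
      have h2 : Primrec fun q : List ℕ × List ℕ => q.1.map fun x => x :: q.2 :=
        Primrec.list_map Primrec.fst
          ((Primrec.list_cons.comp Primrec.snd (Primrec.snd.comp Primrec.fst)).to₂)
      exact h2.to₂
    exact h.of_eq fun R => by simp [tuples]

lemma primrec_opc (a kc : ℕ) : Primrec₂ fun n ws => opc n a kc ws := by
  have harg1 : Primrec fun q : (ℕ × List ℕ) × ℕ =>
      horner (k1 q.1.1) ((List.range a).map fun i =>
        digit (k1 q.1.1) (q.1.2.getD i 0).unpair.1 q.2) := by
    refine primrec_horner.comp (primrec_k1.comp (Primrec.fst.comp Primrec.fst)) ?_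
    refine Primrec.list_map (Primrec.const (List.range a)) ?_
    exact (primrec_digit.comp (Primrec.pair
      (primrec_k1.comp (Primrec.fst.comp (Primrec.fst.comp Primrec.fst)))
      (Primrec.pair
        (Primrec.fst.comp (Primrec.unpair.comp
          ((Primrec.list_getD (0 : ℕ)).comp
            (Primrec.snd.comp (Primrec.fst.comp Primrec.fst)) Primrec.snd)))
        (Primrec.snd.comp Primrec.fst)))).to₂
  have hfirst : Primrec fun q : ℕ × List ℕ =>
      horner (k1 q.1) ((List.range (TT q.1)).map fun t =>
        (tbl q.1.unpair.1 kc).getD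
          (horner (k1 q.1) ((List.range a).map fun i =>
            digit (k1 q.1) (q.2.getD i 0).unpair.1 t)) 0) := by
    refine primrec_horner.comp (primrec_k1.comp Primrec.fst) ?_
    refine Primrec.list_map (Primrec.list_range.comp (primrec_TT.comp Primrec.fst)) ?_
    have hh : Primrec fun q : (ℕ × List ℕ) × ℕ =>
        (tbl q.1.1.unpair.1 kc).getD
          (horner (k1 q.1.1) ((List.range a).map fun i =>
            digit (k1 q.1.1) (q.1.2.getD i 0).unpair.1 q.2)) 0 :=
      (Primrec.list_getD (0 : ℕ)).comp
        (primrec_tbl.comp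
          (Primrec.fst.comp (Primrec.unpair.comp (Primrec.fst.comp Primrec.fst)))
          (Primrec.const kc))
        harg1
    exact hh.to₂
  have hsecond : Primrec fun q : ℕ × List ℕ =>
      (tbl q.1.unpair.2 kc).getD
        (horner (k2 q.1) ((List.range a).map fun i => (q.2.getD i 0).unpair.2)) 0 := by
    refine (Primrec.list_getD (0 : ℕ)).comp
      (primrec_tbl.comp
        (Primrec.snd.comp (Primrec.unpair.comp Primrec.fst)) (Primrec.const kc)) ?_
    refine primrec_horner.comp (primrec_k2.comp Primrec.fst) ?_
    refine Primrec.list_map (Primrec.const (List.range a)) ?_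
    exact (Primrec.snd.comp (Primrec.unpair.comp
      ((Primrec.list_getD (0 : ℕ)).comp (Primrec.snd.comp Primrec.fst)
        Primrec.snd))).to₂
  exact (Primrec₂.natPair.comp hfirst hsecond).to₂

lemma primrec_stepc (a kc : ℕ) : Primrec₂ fun n R => stepc n a kc R := by
  have h : Primrec fun q : ℕ × List ℕ =>
      q.2 ++ (tuples a q.2).map (opc q.1 a kc) := by
    refine Primrec.list_append.comp Primrec.snd ?_
    refine Primrec.list_map ((primrec_tuples a).comp Primrec.snd) ?_
    exact ((primrec_opc a kc).comp (Primrec.fst.comp Primrec.fst) Primrec.snd).to₂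
  exact h.to₂

lemma primrec_allb {α : Type} [Primcodable α] {p : α → ℕ → Bool} {l : α → List ℕ}
    (hp : Primrec₂ p) (hl : Primrec l) : Primrec fun x => allb (p x) (l x) := by
  refine Primrec.list_foldr (h := fun (x : α) (q : ℕ × Bool) => p x q.1 && q.2)
    hl (Primrec.const true) ?_
  have hh : Primrec fun q : α × ℕ × Bool => p q.1 q.2.1 && q.2.2 :=
    (Primrec.cond (hp.comp Primrec.fst (Primrec.fst.comp Primrec.snd))
      (Primrec.snd.comp Primrec.snd) (Primrec.const false)).of_eq fun q => by
        cases h : p q.1 q.2.1 <;> simp [h]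
  exact hh.to₂

lemma primrec_goodb : Primrec₂ goodb := by
  have h1 : Primrec fun q : ℕ × ℕ =>
      allb (fun t => (dlist q.1.unpair.1).getD (digit (k1 q.1) q.2.unpair.1 t) false)
        (List.range (TT q.1)) := by
    refine primrec_allb ?_ (Primrec.list_range.comp (primrec_TT.comp Primrec.fst))
    have hh : Primrec fun q : (ℕ × ℕ) × ℕ =>
        (dlist q.1.1.unpair.1).getD (digit (k1 q.1.1) q.1.2.unpair.1 q.2) false :=
      (Primrec.list_getD false).comp
        (primrec_dlist.comp
          (Primrec.fst.comp (Primrec.unpair.comp (Primrec.fst.comp Primrec.fst))))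
        (primrec_digit.comp (Primrec.pair
          (primrec_k1.comp (Primrec.fst.comp Primrec.fst))
          (Primrec.pair
            (Primrec.fst.comp (Primrec.unpair.comp (Primrec.snd.comp Primrec.fst)))
            Primrec.snd)))
    exact hh.to₂
  have h2 : Primrec fun q : ℕ × ℕ => (dlist q.1.unpair.2).getD q.2.unpair.2 false :=
    (Primrec.list_getD false).comp
      (primrec_dlist.comp (Primrec.snd.comp (Primrec.unpair.comp Primrec.fst)))
      (Primrec.snd.comp (Primrec.unpair.comp Primrec.snd))
  have h : Primrec fun q : ℕ × ℕ => goodb q.1 q.2 := by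
    refine (Primrec.cond h1 h2 (Primrec.const true)).of_eq fun q => ?_
    show _ = goodb q.1 q.2
    unfold goodb
    cases allb (fun t => (dlist q.1.unpair.1).getD (digit (k1 q.1) q.2.unpair.1 t) false)
      (List.range (TT q.1)) <;> rfl
  exact h.to₂


/-! ### Semantics: renaming and reachability -/

variable {C : Type} {ar : C → ℕ}

def ren (σ : ℕ → ℕ) : Fml C ar → Fml C ar
  | .var n => .var (σ n)
  | .app c f => .app c fun i => ren σ (f i)

lemma eval_ren (M : Mat C ar) (I : ℕ → M.V) (σ : ℕ → ℕ) (A : Fml C ar) :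
    M.eval I (ren σ A) = M.eval (fun n => I (σ n)) A := by
  induction A with
  | var n => rfl
  | app c f ih => simp only [ren, Mat.eval]; congr 1; funext i; exact ih i

section Semantics

variable (m₁ m₂ : ℕ)
variable (intp₁ : (c : C) → (Fin (ar c) → Fin (m₁ + 1)) → Fin (m₁ + 1))
variable (intp₂ : (c : C) → (Fin (ar c) → Fin (m₂ + 1)) → Fin (m₂ + 1))

/-- The product algebra used to decide tautology containment. -/
abbrev PP (m₁ m₂ : ℕ) : Type :=
  ((Fin (m₂ + 1) → Fin (m₁ + 1)) → Fin (m₁ + 1)) × Fin (m₂ + 1)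

inductive Reach : PP m₁ m₂ → Prop
  | var (v : Fin (m₂ + 1)) : Reach (fun t => t v, v)
  | app (c : C) (ps : Fin (ar c) → PP m₁ m₂) (h : ∀ i, Reach (ps i)) :
      Reach (fun t => intp₁ c fun i => (ps i).1 t, intp₂ c fun i => (ps i).2)

variable (des₁ : Fin (m₁ + 1) → Bool) (des₂ : Fin (m₂ + 1) → Bool)

def M₁ : Mat C ar := Mat.mk (Fin (m₁ + 1)) {v | des₁ v = true} intp₁
def M₂ : Mat C ar := Mat.mk (Fin (m₂ + 1)) {v | des₂ v = true} intp₂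

/-- homomorphism from formulas (relative to a valuation) into the product algebra -/
def hm (α : ℕ → Fin (m₂ + 1)) (A : Fml C ar) : PP m₁ m₂ :=
  (fun t => (M₁ m₁ intp₁ des₁).eval (fun n => t (α n)) A,
   (M₂ m₂ intp₂ des₂).eval α A)

lemma reach_hm (α : ℕ → Fin (m₂ + 1)) (A : Fml C ar) :
    Reach m₁ m₂ intp₁ intp₂ (hm m₁ m₂ intp₁ intp₂ des₁ des₂ α A) := by
  induction A with
  | var n => exact Reach.var (α n)
  | app c f ih =>
    exact Reach.app c (fun i => hm m₁ m₂ intp₁ intp₂ des₁ des₂ α (f i)) ih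

def α₀ : ℕ → Fin (m₂ + 1) := fun n => ⟨n % (m₂ + 1), Nat.mod_lt _ (Nat.succ_pos m₂)⟩

lemma reach_exists {p : PP m₁ m₂} (hp : Reach m₁ m₂ intp₁ intp₂ p) :
    ∃ A : Fml C ar, p = hm m₁ m₂ intp₁ intp₂ des₁ des₂ (α₀ m₂) A := by
  induction hp with
  | var v =>
    refine ⟨.var v.val, ?_⟩
    have : α₀ m₂ v.val = v := by
      simp [α₀, Nat.mod_eq_of_lt v.isLt]
    simp [hm, Mat.eval, this]
  | app c ps h ih =>
    choose As hAs using ih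
    refine ⟨.app c As, ?_⟩
    simp only [hm, Mat.eval]
    refine Prod.ext ?_ ?_
    · funext t
      simp only
      congr 1
      funext i
      rw [hAs i]
      rfl
    · simp only
      congr 1
      funext i
      rw [hAs i]
      rfl

lemma taut_iff_reach :
    (M₁ m₁ intp₁ des₁ : Mat C ar).Taut ⊆ (M₂ m₂ intp₂ des₂).Taut ↔
      ∀ p : PP m₁ m₂, Reach m₁ m₂ intp₁ intp₂ p →
        (∀ t, des₁ (p.1 t) = true) → des₂ p.2 = true := by
  constructor
  · intro hsub p hp hgood
    obtain ⟨A, rfl⟩ := reach_exists m₁ m₂ intp₁ intp₂ des₁ des₂ hp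
    have htaut : ren (fun n => n % (m₂ + 1)) A ∈ (M₁ m₁ intp₁ des₁ : Mat C ar).Taut := by
      intro I
      rw [eval_ren]
      have := hgood (fun v => I v.val)
      exact this
    have h2 := hsub htaut (α₀ m₂)
    rw [eval_ren (M₂ m₂ intp₂ des₂) (α₀ m₂)] at h2
    have heq : (fun n => α₀ m₂ (n % (m₂ + 1))) = α₀ m₂ := by
      funext n
      simp [α₀, Nat.mod_mod_of_dvd]
    rw [heq] at h2
    exact h2
  · intro hreach A hA I₂
    have hp := reach_hm m₁ m₂ intp₁ intp₂ des₁ des₂ I₂ A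
    have hgood : ∀ t, des₁ ((hm m₁ m₂ intp₁ intp₂ des₁ des₂ I₂ A).1 t) = true := by
      intro t
      have := hA (fun n => t (I₂ n))
      exact this
    have := hreach _ hp hgood
    exact this

end Semantics

/-! ### Decoding correctness -/

section Decode

variable [Fintype C] [DecidableEq C] [Encodable C]

lemma foldr_find (c : C) (G : C → ℕ) (l : List C) (hc : c ∈ l) :
    ((l.map fun c' => Nat.pair (Encodable.encode c') (G c')).foldr
      (fun p r => if p.unpair.1 = Encodable.encode c then p.unpair.2 else r) 0) = G c := by
  induction l with
  | nil => simp at hc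
  | cons c' l ih =>
    simp only [List.map_cons, List.foldr_cons, Nat.unpair_pair]
    by_cases h : Encodable.encode c' = Encodable.encode c
    · rw [if_pos h, Encodable.encode_injective h]
    · rw [if_neg h]
      apply ih
      rcases List.mem_cons.1 hc with rfl | hmem
      · exact absurd rfl h
      · exact hmem

variable (m₁ m₂ : ℕ)
variable (des₁ : Fin (m₁ + 1) → Bool) (des₂ : Fin (m₂ + 1) → Bool)
variable (intp₁ : (c : C) → (Fin (ar c) → Fin (m₁ + 1)) → Fin (m₁ + 1))
variable (intp₂ : (c : C) → (Fin (ar c) → Fin (m₂ + 1)) → Fin (m₂ + 1))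

lemma dlist_encMat :
    dlist (encMat m₁ des₁ intp₁) = List.ofFn (fun i => des₁ i) := by
  simp [dlist, encMat, encDes, Nat.unpair_pair, Encodable.encodek]

lemma tbl_encMat (c : C) :
    tbl (encMat m₁ des₁ intp₁) (Encodable.encode c) =
      List.ofFn (fun j : Fin ((m₁ + 1) ^ ar c) =>
        (intp₁ c fun i =>
          (⟨j.val / (m₁ + 1) ^ i.val % (m₁ + 1),
            Nat.mod_lt _ (Nat.succ_pos m₁)⟩ : Fin (m₁ + 1))).val) := by
  have h1 : (encMat m₁ des₁ intp₁).unpair.2.unpair.2 = encInterp m₁ intp₁ := by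
    simp [encMat, Nat.unpair_pair]
  rw [tbl, h1, encInterp, Encodable.encodek]
  simp only [Option.getD_some]
  rw [foldr_find c
    (fun c' => Encodable.encode (List.ofFn fun j : Fin ((m₁ + 1) ^ ar c') =>
      (intp₁ c' fun i =>
        (⟨j.val / (m₁ + 1) ^ i.val % (m₁ + 1),
          Nat.mod_lt _ (Nat.succ_pos m₁)⟩ : Fin (m₁ + 1))).val))
    Finset.univ.toList (Finset.mem_toList.2 (Finset.mem_univ c))]
  rw [Encodable.encodek]
  rfl

/-- Table lookup lemma: looking up a Horner-packed argument tuple in an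
encoded truth table gives the value of the truth function. -/
lemma tbl_getD_horner (m : ℕ) (intp : (c : C) → (Fin (ar c) → Fin (m + 1)) → Fin (m + 1))
    (c : C) (args : Fin (ar c) → Fin (m + 1)) (g : ℕ → ℕ)
    (hg : ∀ i : Fin (ar c), g i.val = (args i).val) :
    (List.ofFn (fun j : Fin ((m + 1) ^ ar c) =>
        (intp c fun i =>
          (⟨j.val / (m + 1) ^ i.val % (m + 1),
            Nat.mod_lt _ (Nat.succ_pos m)⟩ : Fin (m + 1))).val)).getD
      (horner (m + 1) ((List.range (ar c)).map g)) 0 = (intp c args).val := by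
  set l : List ℕ := (List.range (ar c)).map g with hl
  have hmem : ∀ x ∈ l, x < m + 1 := by
    intro x hx
    rw [hl, List.mem_map] at hx
    obtain ⟨i, hi, rfl⟩ := hx
    rw [List.mem_range] at hi
    rw [hg ⟨i, hi⟩]
    exact (args ⟨i, hi⟩).isLt
  have hlen : l.length = ar c := by simp [hl]
  have hJ : horner (m + 1) l < (m + 1) ^ ar c := by
    have := horner_lt (b := m + 1) (l := l) (Nat.succ_pos m) hmem
    rwa [hlen] at this
  rw [getD_ofFn _ hJ]
  suffices h : (fun i : Fin (ar c) =>
      (⟨(⟨horner (m + 1) l, hJ⟩ : Fin ((m + 1) ^ ar c)).val / (m + 1) ^ i.val % (m + 1),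
        Nat.mod_lt _ (Nat.succ_pos m)⟩ : Fin (m + 1))) = args by rw [h]
  funext i
  apply Fin.ext
  show horner (m + 1) l / (m + 1) ^ i.val % (m + 1) = (args i).val
  have hd : horner (m + 1) l / (m + 1) ^ i.val % (m + 1) = l.getD i.val 0 :=
    horner_digit hmem i.val (by rw [hlen]; exact i.isLt)
  rw [hd, hl, getD_map_range g (by exact i.isLt), hg i]

end Decode

/-! ### Correspondence between codes and the product algebra -/

section Codes

variable [Fintype C] [DecidableEq C] [Encodable C]
variable (m₁ m₂ : ℕ)
variable (des₁ : Fin (m₁ + 1) → Bool) (des₂ : Fin (m₂ + 1) → Bool)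
variable (intp₁ : (c : C) → (Fin (ar c) → Fin (m₁ + 1)) → Fin (m₁ + 1))
variable (intp₂ : (c : C) → (Fin (ar c) → Fin (m₂ + 1)) → Fin (m₂ + 1))

/-- decoding a number `< (m₁+1)^(m₂+1)` as a valuation of the `m₂+1` variables -/
def decT (u : ℕ) : Fin (m₂ + 1) → Fin (m₁ + 1) :=
  fun v => ⟨digit (m₁ + 1) u v.val, Nat.mod_lt _ (Nat.succ_pos m₁)⟩

/-- encoding an element of the product algebra as a natural number -/
def encP (p : PP m₁ m₂) : ℕ :=
  Nat.pair
    (horner (m₁ + 1) ((List.range ((m₁ + 1) ^ (m₂ + 1))).map fun u =>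
      (p.1 (decT m₁ m₂ u)).val))
    p.2.val

local notation "n₀" => Nat.pair (encMat m₁ des₁ intp₁) (encMat m₂ des₂ intp₂)

lemma k1_def : k1 n₀ = m₁ + 1 := by simp [k1, encMat, Nat.unpair_pair]
lemma k2_def : k2 n₀ = m₂ + 1 := by simp [k2, encMat, Nat.unpair_pair]
lemma TT_def : TT n₀ = (m₁ + 1) ^ (m₂ + 1) := by rw [TT, k1_def, k2_def]

lemma encT_decT (t : Fin (m₂ + 1) → Fin (m₁ + 1)) :
    ∃ u < (m₁ + 1) ^ (m₂ + 1), decT m₁ m₂ u = t := by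
  refine ⟨horner (m₁ + 1) (List.ofFn fun v => (t v).val), ?_, ?_⟩
  · have h := horner_lt (b := m₁ + 1) (l := List.ofFn fun v => (t v).val)
      (Nat.succ_pos m₁) (by
        intro x hx
        rw [List.mem_ofFn] at hx
        obtain ⟨v, rfl⟩ := hx
        exact (t v).isLt)
    simpa using h
  · funext v
    apply Fin.ext
    show digit (m₁ + 1) _ v.val = (t v).val
    rw [digit]
    have := horner_digit (b := m₁ + 1) (l := List.ofFn fun v => (t v).val)
      (by
        intro x hx
        rw [List.mem_ofFn] at hx
        obtain ⟨w, rfl⟩ := hx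
        exact (t w).isLt) v.val (by simpa using v.isLt)
    rw [this, getD_ofFn _ (by simpa using v.isLt)]

lemma encP_fst_digit (p : PP m₁ m₂) {u : ℕ} (hu : u < (m₁ + 1) ^ (m₂ + 1)) :
    digit (m₁ + 1) (encP m₁ m₂ p).unpair.1 u = (p.1 (decT m₁ m₂ u)).val := by
  rw [encP, Nat.unpair_pair, digit]
  have hmem : ∀ x ∈ (List.range ((m₁ + 1) ^ (m₂ + 1))).map fun u =>
      (p.1 (decT m₁ m₂ u)).val, x < m₁ + 1 := by
    intro x hx
    rw [List.mem_map] at hx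
    obtain ⟨w, _, rfl⟩ := hx
    exact (p.1 (decT m₁ m₂ w)).isLt
  rw [horner_digit hmem u (by simpa using hu), getD_map_range _ hu]

lemma encP_snd (p : PP m₁ m₂) : (encP m₁ m₂ p).unpair.2 = p.2.val := by
  rw [encP, Nat.unpair_pair]

/-- Generators: the codes in `gens` are exactly the codes of the variable
elements of the product algebra. -/
lemma mem_gens_iff (x : ℕ) :
    x ∈ gens n₀ ↔ ∃ v : Fin (m₂ + 1), x = encP m₁ m₂ (fun t => t v, v) := by
  rw [gens, List.mem_map]
  constructor
  · rintro ⟨v, hv, rfl⟩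
    rw [List.mem_range, k2_def] at hv
    refine ⟨⟨v, hv⟩, ?_⟩
    rw [encP]
    simp only [k1_def, TT_def]
    rfl
  · rintro ⟨v, rfl⟩
    refine ⟨v.val, by rw [List.mem_range, k2_def]; exact v.isLt, ?_⟩
    rw [encP]
    simp only [k1_def, TT_def]
    rfl

/-- Compatibility of the numeric connective operation with the product algebra. -/
lemma opc_encP (c : C) (ps : Fin (ar c) → PP m₁ m₂) (ws : List ℕ)
    (hlen : ws.length = ar c)
    (hws : ∀ i : Fin (ar c), ws.getD i.val 0 = encP m₁ m₂ (ps i)) :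
    opc n₀ (ar c) (Encodable.encode c) ws =
      encP m₁ m₂ (fun t => intp₁ c fun i => (ps i).1 t, intp₂ c fun i => (ps i).2) := by
  have hu1 : (n₀ : ℕ).unpair.1 = encMat m₁ des₁ intp₁ := by rw [Nat.unpair_pair]
  have hu2 : (n₀ : ℕ).unpair.2 = encMat m₂ des₂ intp₂ := by rw [Nat.unpair_pair]
  rw [opc, encP, hu1, hu2, k1_def, k2_def, TT_def]
  congr 1
  · -- first components
    congr 1
    apply List.map_congr_left
    intro u hu
    rw [List.mem_range] at hu
    rw [tbl_encMat m₁ des₁ intp₁ c]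
    rw [tbl_getD_horner (C := C) (ar := ar) m₁ intp₁ c (fun i => (ps i).1 (decT m₁ m₂ u))
      (fun i => digit (m₁ + 1) (ws.getD i 0).unpair.1 u) ?_]
    · intro i
      show digit (m₁ + 1) (ws.getD i.val 0).unpair.1 u = ((ps i).1 (decT m₁ m₂ u)).val
      rw [hws i, encP_fst_digit m₁ m₂ (ps i) hu]
  · -- second components
    rw [tbl_encMat m₂ des₂ intp₂ c]
    rw [tbl_getD_horner (C := C) (ar := ar) m₂ intp₂ c (fun i => (ps i).2)
      (fun i => (ws.getD i 0).unpair.2) ?_]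
    · intro i
      show (ws.getD i.val 0).unpair.2 = ((ps i).2).val
      rw [hws i, encP_snd]

end Codes

/-! ### The full step function and its properties -/

section Step

def stepAux (ar : C → ℕ) [Encodable C] : List C → ℕ → List ℕ → List ℕ
  | [], _, R => R
  | c :: cs, n, R => stepc n (ar c) (Encodable.encode c) (stepAux ar cs n R)

variable [Fintype C] [DecidableEq C] [Encodable C]

noncomputable def step (ar : C → ℕ) [Fintype C] [Encodable C] (n : ℕ) (R : List ℕ) : List ℕ :=
  stepAux ar Finset.univ.toList n R

noncomputable def run (ar : C → ℕ) [Fintype C] [Encodable C] (n : ℕ) : List ℕ :=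
  (step ar n)^[NP n] (gens n)

noncomputable def answer (ar : C → ℕ) [Fintype C] [Encodable C] (n : ℕ) : Bool :=
  allb (goodb n) (run ar n)

lemma primrec_stepAux (cs : List C) : Primrec₂ (stepAux ar cs) := by
  induction cs with
  | nil => exact Primrec₂.right
  | cons c cs ih =>
    exact ((primrec_stepc (ar c) (Encodable.encode c)).comp Primrec.fst
      (ih.comp Primrec.fst Primrec.snd)).to₂

lemma primrec_run : Primrec (run ar) :=
  Primrec.nat_iterate primrec_NP primrec_gens (primrec_stepAux _)

lemma primrec_answer : Primrec (answer ar) :=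
  primrec_allb primrec_goodb primrec_run

/-! ### Membership lemmas -/

lemma mem_tuples {a : ℕ} {R ws : List ℕ} :
    ws ∈ tuples a R ↔ ws.length = a ∧ ∀ i < a, ws.getD i 0 ∈ R := by
  induction a generalizing ws with
  | zero =>
    simp only [tuples, List.mem_singleton]
    constructor
    · rintro rfl; exact ⟨rfl, by simp⟩
    · rintro ⟨h, -⟩; exact List.length_eq_zero_iff.1 h
  | succ a ih =>
    simp only [tuples, List.mem_flatMap, List.mem_map]
    constructor
    · rintro ⟨l, hl, x, hx, rfl⟩
      obtain ⟨hlen, hget⟩ := ih.1 hl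
      refine ⟨by simp [hlen], ?_⟩
      intro i hi
      cases i with
      | zero => exact hx
      | succ i => exact hget i (by omega)
    · rintro ⟨hlen, hget⟩
      cases ws with
      | nil => simp at hlen
      | cons x l =>
        refine ⟨l, ih.2 ⟨by simpa using hlen, fun i hi => hget (i + 1) (by omega)⟩,
          x, hget 0 (by omega), rfl⟩

lemma mem_stepc {n a kc : ℕ} {R : List ℕ} {x : ℕ} :
    x ∈ stepc n a kc R ↔ x ∈ R ∨ ∃ ws ∈ tuples a R, x = opc n a kc ws := by
  simp only [stepc, List.mem_append, List.mem_map]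
  constructor
  · rintro (h | ⟨ws, hws, rfl⟩)
    · exact Or.inl h
    · exact Or.inr ⟨ws, hws, rfl⟩
  · rintro (h | ⟨ws, hws, rfl⟩)
    · exact Or.inl h
    · exact Or.inr ⟨ws, hws, rfl⟩

lemma subset_stepAux (cs : List C) (n : ℕ) (R : List ℕ) :
    ∀ x ∈ R, x ∈ stepAux ar cs n R := by
  induction cs with
  | nil => exact fun x hx => hx
  | cons c cs ih =>
    intro x hx
    exact mem_stepc.2 (Or.inl (ih x hx))

lemma tuples_mono {a : ℕ} {R R' ws : List ℕ} (h : ∀ x ∈ R, x ∈ R')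
    (hws : ws ∈ tuples a R) : ws ∈ tuples a R' := by
  obtain ⟨hlen, hget⟩ := mem_tuples.1 hws
  exact mem_tuples.2 ⟨hlen, fun i hi => h _ (hget i hi)⟩

lemma opc_mem_stepAux {cs : List C} {c : C} (hc : c ∈ cs) {n : ℕ} {R ws : List ℕ}
    (hws : ws ∈ tuples (ar c) R) :
    opc n (ar c) (Encodable.encode c) ws ∈ stepAux ar cs n R := by
  induction cs with
  | nil => simp at hc
  | cons c' cs ih =>
    rcases List.mem_cons.1 hc with rfl | hc'
    · exact mem_stepc.2 (Or.inr ⟨ws, tuples_mono (subset_stepAux cs n R) hws, rfl⟩)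
    · exact mem_stepc.2 (Or.inl (ih hc'))

lemma stepAux_congr {cs : List C} {n : ℕ} {R R' : List ℕ}
    (h : ∀ x, x ∈ R ↔ x ∈ R') :
    ∀ x, x ∈ stepAux ar cs n R ↔ x ∈ stepAux ar cs n R' := by
  induction cs with
  | nil => exact h
  | cons c cs ih =>
    intro x
    rw [show stepAux ar (c :: cs) n R = stepc n (ar c) (Encodable.encode c) (stepAux ar cs n R)
        from rfl,
      show stepAux ar (c :: cs) n R' = stepc n (ar c) (Encodable.encode c) (stepAux ar cs n R')
        from rfl,
      mem_stepc, mem_stepc]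
    constructor
    · rintro (hx | ⟨ws, hws, rfl⟩)
      · exact Or.inl ((ih x).1 hx)
      · exact Or.inr ⟨ws, tuples_mono (fun y hy => (ih y).1 hy) hws, rfl⟩
    · rintro (hx | ⟨ws, hws, rfl⟩)
      · exact Or.inl ((ih x).2 hx)
      · exact Or.inr ⟨ws, tuples_mono (fun y hy => (ih y).2 hy) hws, rfl⟩

lemma stepAux_induct {D : ℕ → Prop} {cs : List C} {n : ℕ} {R : List ℕ}
    (hR : ∀ x ∈ R, D x)
    (hop : ∀ c ∈ cs, ∀ ws : List ℕ, ws.length = ar c →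
      (∀ i < ar c, D (ws.getD i 0)) → D (opc n (ar c) (Encodable.encode c) ws)) :
    ∀ x ∈ stepAux ar cs n R, D x := by
  induction cs with
  | nil => exact hR
  | cons c cs ih =>
    intro x hx
    rcases mem_stepc.1 hx with hx' | ⟨ws, hws, rfl⟩
    · exact ih (fun c' hc' => hop c' (List.mem_cons_of_mem _ hc')) x hx'
    · obtain ⟨hlen, hget⟩ := mem_tuples.1 hws
      exact hop c List.mem_cons_self ws hlen fun i hi =>
        ih (fun c' hc' => hop c' (List.mem_cons_of_mem _ hc')) _ (hget i hi)

lemma iterate_induct {D : ℕ → Prop} {n : ℕ}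
    (hgens : ∀ x ∈ gens n, D x)
    (hop : ∀ c : C, ∀ ws : List ℕ, ws.length = ar c →
      (∀ i < ar c, D (ws.getD i 0)) → D (opc n (ar c) (Encodable.encode c) ws)) :
    ∀ i, ∀ x ∈ (step ar n)^[i] (gens n), D x := by
  intro i
  induction i with
  | zero => exact hgens
  | succ N ih =>
    rw [Function.iterate_succ_apply']
    exact stepAux_induct ih fun c _ => hop c

lemma run_induct {D : ℕ → Prop} {n : ℕ}
    (hgens : ∀ x ∈ gens n, D x)
    (hop : ∀ c : C, ∀ ws : List ℕ, ws.length = ar c →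
      (∀ i < ar c, D (ws.getD i 0)) → D (opc n (ar c) (Encodable.encode c) ws)) :
    ∀ x ∈ run ar n, D x :=
  iterate_induct hgens hop (NP n)

lemma subset_run_succ {n : ℕ} {i : ℕ} {x : ℕ}
    (hx : x ∈ (step ar n)^[i] (gens n)) : x ∈ (step ar n)^[i + 1] (gens n) := by
  rw [Function.iterate_succ_apply']
  exact subset_stepAux _ _ _ x hx

lemma subset_run_le {n : ℕ} {i j : ℕ} (hij : i ≤ j) {x : ℕ}
    (hx : x ∈ (step ar n)^[i] (gens n)) : x ∈ (step ar n)^[j] (gens n) := by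
  induction hij with
  | refl => exact hx
  | step _ ih => exact subset_run_succ (ih)

end Step

/-! ### Main correctness -/

section Main

variable [Fintype C] [DecidableEq C] [Encodable C]
variable (m₁ m₂ : ℕ)
variable (des₁ : Fin (m₁ + 1) → Bool) (des₂ : Fin (m₂ + 1) → Bool)
variable (intp₁ : (c : C) → (Fin (ar c) → Fin (m₁ + 1)) → Fin (m₁ + 1))
variable (intp₂ : (c : C) → (Fin (ar c) → Fin (m₂ + 1)) → Fin (m₂ + 1))

local notation "n₀" => Nat.pair (encMat m₁ des₁ intp₁) (encMat m₂ des₂ intp₂)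

lemma iterate_sound : ∀ i, ∀ x ∈ (step ar n₀)^[i] (gens n₀),
    ∃ p : PP m₁ m₂, Reach m₁ m₂ intp₁ intp₂ p ∧ x = encP m₁ m₂ p := by
  apply iterate_induct
  · intro x hx
    obtain ⟨v, rfl⟩ := (mem_gens_iff m₁ m₂ des₁ des₂ intp₁ intp₂ x).1 hx
    exact ⟨_, Reach.var v, rfl⟩
  · intro c ws hlen hget
    choose! ps h1 h2 using hget
    refine ⟨_, Reach.app c (fun i => ps i.val) (fun i => h1 i.val i.isLt), ?_⟩
    exact opc_encP m₁ m₂ des₁ des₂ intp₁ intp₂ c _ ws hlen fun i => h2 i.val i.isLt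

lemma NP_card : Fintype.card (PP m₁ m₂) = NP n₀ := by
  rw [NP, k1_def, k2_def, TT_def]
  simp [Fintype.card_fun]

lemma run_closed (c : C) (ws : List ℕ) (hws : ws ∈ tuples (ar c) (run ar n₀)) :
    opc n₀ (ar c) (Encodable.encode c) ws ∈ run ar n₀ := by
  classical
  set N := NP n₀ with hN
  set L : ℕ → List ℕ := fun i => (step ar n₀)^[i] (gens n₀) with hL
  set S : ℕ → Finset ℕ := fun i => (L i).toFinset with hS
  have hmono : ∀ i, S i ⊆ S (i + 1) := by
    intro i x hx
    rw [hS, List.mem_toFinset] at *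
    exact subset_run_succ hx
  have hcard : ∀ i, (S i).card ≤ N := by
    intro i
    have hsub : S i ⊆ (Finset.univ : Finset (PP m₁ m₂)).image (encP m₁ m₂) := by
      intro x hx
      rw [hS, List.mem_toFinset] at hx
      obtain ⟨p, _, rfl⟩ := iterate_sound m₁ m₂ des₁ des₂ intp₁ intp₂ i x hx
      exact Finset.mem_image.2 ⟨p, Finset.mem_univ p, rfl⟩
    calc (S i).card ≤ _ := Finset.card_le_card hsub
      _ ≤ (Finset.univ : Finset (PP m₁ m₂)).card := Finset.card_image_le
      _ = Fintype.card (PP m₁ m₂) := rfl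
      _ = N := NP_card m₁ m₂ des₁ des₂ intp₁ intp₂
  have hstab : ∃ j < N, S j = S (j + 1) := by
    by_contra hcon
    push_neg at hcon
    have hgrow : ∀ j ≤ N, j + 1 ≤ (S j).card := by
      intro j hj
      induction j with
      | zero =>
        have : encP m₁ m₂ (fun t => t 0, 0) ∈ S 0 := by
          rw [hS, List.mem_toFinset]
          exact (mem_gens_iff m₁ m₂ des₁ des₂ intp₁ intp₂ _).2 ⟨0, rfl⟩
        exact Finset.card_pos.2 ⟨_, this⟩
      | succ j ih =>
        have hlt : S j ⊂ S (j + 1) :=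
          (Finset.ssubset_iff_of_subset (hmono j)).2 (by
            by_contra hh
            push_neg at hh
            exact hcon j (by omega) (Finset.Subset.antisymm (hmono j)
              fun x hx => by by_contra hxx; exact hxx (hh x hx) |>.elim))
        have := Finset.card_lt_card hlt
        have := ih (by omega)
        omega
    have := hgrow N le_rfl
    have := hcard N
    omega
  obtain ⟨j, hjN, hstabj⟩ := hstab
  have hstable : ∀ i, j ≤ i → S i = S j := by
    intro i hi
    induction hi with
    | refl => rfl
    | @step i _ ih =>
      have hmemiff : ∀ x, x ∈ L i ↔ x ∈ L j := by
        intro x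
        rw [← List.mem_toFinset, ← List.mem_toFinset]
        show x ∈ S i ↔ x ∈ S j
        rw [ih]
      have : ∀ x, x ∈ L (i + 1) ↔ x ∈ L (j + 1) := by
        intro x
        have h1 : L (i + 1) = step ar n₀ (L i) := Function.iterate_succ_apply' _ _ _
        have h2 : L (j + 1) = step ar n₀ (L j) := Function.iterate_succ_apply' _ _ _
        rw [h1, h2]
        exact stepAux_congr hmemiff x
      show S (i + 1) = S j
      apply Finset.ext
      intro x
      show x ∈ (L (i + 1)).toFinset ↔ x ∈ S j
      rw [List.mem_toFinset, this x, ← List.mem_toFinset]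
      show x ∈ S (j + 1) ↔ x ∈ S j
      rw [← hstabj]
  have hNj : S N = S j := hstable N (by omega)
  have hws' : ws ∈ tuples (ar c) (L j) := by
    apply tuples_mono _ hws
    intro x hx
    have : x ∈ S j := by
      rw [← hNj, hS, List.mem_toFinset]
      exact hx
    rw [hS, List.mem_toFinset] at this
    exact this
  have hop : opc n₀ (ar c) (Encodable.encode c) ws ∈ L (j + 1) := by
    have h2 : L (j + 1) = step ar n₀ (L j) := Function.iterate_succ_apply' _ _ _
    rw [h2]
    exact opc_mem_stepAux (Finset.mem_toList.2 (Finset.mem_univ c)) hws'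
  have : opc n₀ (ar c) (Encodable.encode c) ws ∈ S (j + 1) := by
    rw [hS, List.mem_toFinset]; exact hop
  rw [hstabj.symm, ← hNj, hS, List.mem_toFinset] at this
  exact this

lemma reach_encP_mem_run {p : PP m₁ m₂} (hp : Reach m₁ m₂ intp₁ intp₂ p) :
    encP m₁ m₂ p ∈ run ar n₀ := by
  induction hp with
  | var v =>
    have : encP m₁ m₂ (fun t => t v, v) ∈ gens n₀ :=
      (mem_gens_iff m₁ m₂ des₁ des₂ intp₁ intp₂ _).2 ⟨v, rfl⟩
    exact subset_run_le (Nat.zero_le _) this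
  | app c ps h ih =>
    set ws : List ℕ := List.ofFn fun i => encP m₁ m₂ (ps i) with hwsdef
    have hlen : ws.length = ar c := by simp [hwsdef]
    have hget : ∀ i : Fin (ar c), ws.getD i.val 0 = encP m₁ m₂ (ps i) := by
      intro i
      rw [hwsdef, getD_ofFn _ i.isLt]
    have hmem : ws ∈ tuples (ar c) (run ar n₀) := by
      apply mem_tuples.2 ⟨hlen, ?_⟩
      intro i hi
      rw [show ws.getD i 0 = encP m₁ m₂ (ps ⟨i, hi⟩) from hget ⟨i, hi⟩]
      exact ih ⟨i, hi⟩
    have := run_closed m₁ m₂ des₁ des₂ intp₁ intp₂ c ws hmem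
    rwa [opc_encP m₁ m₂ des₁ des₂ intp₁ intp₂ c ps ws hlen hget] at this

lemma goodb_encP (p : PP m₁ m₂) :
    goodb n₀ (encP m₁ m₂ p) = true ↔
      ((∀ t, des₁ (p.1 t) = true) → des₂ p.2 = true) := by
  have hu1 : (n₀ : ℕ).unpair.1 = encMat m₁ des₁ intp₁ := by rw [Nat.unpair_pair]
  have hu2 : (n₀ : ℕ).unpair.2 = encMat m₂ des₂ intp₂ := by rw [Nat.unpair_pair]
  rw [goodb, hu1, hu2, dlist_encMat m₁ des₁ intp₁, dlist_encMat m₂ des₂ intp₂,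
    k1_def, TT_def, encP_snd, getD_ofFn' _ _ p.2.isLt]
  have hall : (allb (fun t => (List.ofFn fun i => des₁ i).getD
        (digit (m₁ + 1) (encP m₁ m₂ p).unpair.1 t) false)
      (List.range ((m₁ + 1) ^ (m₂ + 1))) = true) ↔ ∀ t, des₁ (p.1 t) = true := by
    rw [allb_iff]
    constructor
    · intro h t
      obtain ⟨u, hu, rfl⟩ := encT_decT m₁ m₂ t
      have := h u (List.mem_range.2 hu)
      rwa [encP_fst_digit m₁ m₂ p hu,
        getD_ofFn' _ _ (p.1 (decT m₁ m₂ u)).isLt] at this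
    · intro h u hu
      rw [List.mem_range] at hu
      rw [encP_fst_digit m₁ m₂ p hu, getD_ofFn' _ _ (p.1 (decT m₁ m₂ u)).isLt]
      exact h _
  rcases hb : (allb (fun t => (List.ofFn fun i => des₁ i).getD
        (digit (m₁ + 1) (encP m₁ m₂ p).unpair.1 t) false)
      (List.range ((m₁ + 1) ^ (m₂ + 1)))) with _ | _
  · rw [hb] at hall
    simp only [Bool.not_false, Bool.true_or, true_iff]
    intro h
    exact absurd (hall.2 h) (by simp)
  · rw [hb] at hall
    simp only [Bool.not_true, Bool.false_or]
    constructor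
    · intro h _
      exact h
    · intro h
      exact h (hall.1 rfl)

lemma answer_iff :
    answer ar n₀ = true ↔
      (M₁ m₁ intp₁ des₁ : Mat C ar).Taut ⊆ (M₂ m₂ intp₂ des₂).Taut := by
  rw [taut_iff_reach, answer, allb_iff]
  constructor
  · intro h p hp hdes
    have hmem := reach_encP_mem_run m₁ m₂ des₁ des₂ intp₁ intp₂ hp
    have := h _ hmem
    exact (goodb_encP m₁ m₂ des₁ des₂ intp₁ intp₂ p).1 this hdes
  · intro h x hx
    rw [run] at hx
    obtain ⟨p, hp, rfl⟩ := iterate_sound m₁ m₂ des₁ des₂ intp₁ intp₂ (NP n₀) x hx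
    exact (goodb_encP m₁ m₂ des₁ des₂ intp₁ intp₂ p).2 (h p hp)

end Main

end TautDec

/-- Theorem 4.2 and Corollary 4.3: given two finite-valued matrices (presented
by their codes), it is decidable whether `Taut(M₁) ⊆ Taut(M₂)`, whether
`Taut(M₁) = Taut(M₂)`, and whether `M₁` is better than `M₂`
(`Taut(M₁) ⊊ Taut(M₂)`). -/
theorem decidable_taut_subset [Fintype C] [DecidableEq C] [Encodable C] :
    ∃ f g h : ℕ → Bool, Computable f ∧ Computable g ∧ Computable h ∧
      ∀ (m₁ m₂ : ℕ) (des₁ : Fin (m₁ + 1) → Bool) (des₂ : Fin (m₂ + 1) → Bool)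
        (intp₁ : (c : C) → (Fin (ar c) → Fin (m₁ + 1)) → Fin (m₁ + 1))
        (intp₂ : (c : C) → (Fin (ar c) → Fin (m₂ + 1)) → Fin (m₂ + 1)),
        (f (Nat.pair (encMat m₁ des₁ intp₁) (encMat m₂ des₂ intp₂)) = true ↔
          (Mat.mk (Fin (m₁ + 1)) {v | des₁ v = true} intp₁).Taut ⊆
            (Mat.mk (Fin (m₂ + 1)) {v | des₂ v = true} intp₂).Taut) ∧
        (g (Nat.pair (encMat m₁ des₁ intp₁) (encMat m₂ des₂ intp₂)) = true ↔
          (Mat.mk (Fin (m₁ + 1)) {v | des₁ v = true} intp₁).Taut =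
            (Mat.mk (Fin (m₂ + 1)) {v | des₂ v = true} intp₂).Taut) ∧
        (h (Nat.pair (encMat m₁ des₁ intp₁) (encMat m₂ des₂ intp₂)) = true ↔
          (Mat.mk (Fin (m₁ + 1)) {v | des₁ v = true} intp₁).Taut ⊂
            (Mat.mk (Fin (m₂ + 1)) {v | des₂ v = true} intp₂).Taut) := by
  classical
  have hswap : Primrec (fun n : ℕ => Nat.pair n.unpair.2 n.unpair.1) :=
    Primrec₂.natPair.comp (Primrec.snd.comp Primrec.unpair)
      (Primrec.fst.comp Primrec.unpair)
  have hans : Primrec (TautDec.answer ar) := TautDec.primrec_answer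
  refine ⟨TautDec.answer ar,
    fun n => TautDec.answer ar n && TautDec.answer ar (Nat.pair n.unpair.2 n.unpair.1),
    fun n => TautDec.answer ar n && !TautDec.answer ar (Nat.pair n.unpair.2 n.unpair.1),
    hans.to_comp, ?_, ?_, ?_⟩
  · exact ((Primrec.dom_bool₂ (· && ·)).comp hans (hans.comp hswap)).to_comp
  · exact ((Primrec.dom_bool₂ (fun a b => a && !b)).comp hans (hans.comp hswap)).to_comp
  · intro m₁ m₂ des₁ des₂ intp₁ intp₂
    have h₁ := TautDec.answer_iff m₁ m₂ des₁ des₂ intp₁ intp₂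
    have h₂ := TautDec.answer_iff m₂ m₁ des₂ des₁ intp₂ intp₁
    simp only [TautDec.M₁, TautDec.M₂] at h₁ h₂
    refine ⟨h₁, ?_, ?_⟩
    · simp only [Nat.unpair_pair]
      rw [Bool.and_eq_true, h₁, h₂]
      exact Set.Subset.antisymm_iff.symm
    · simp only [Nat.unpair_pair]
      rw [Bool.and_eq_true, h₁]
      have hnot : (!TautDec.answer ar
          (Nat.pair (encMat m₂ des₂ intp₂) (encMat m₁ des₁ intp₁))) = true ↔
          ¬ ((Mat.mk (Fin (m₂ + 1)) {v | des₂ v = true} intp₂).Taut ⊆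
            (Mat.mk (Fin (m₁ + 1)) {v | des₁ v = true} intp₁).Taut) := by
        rw [← h₂]
        cases TautDec.answer ar
          (Nat.pair (encMat m₂ des₂ intp₂) (encMat m₁ des₁ intp₁)) <;> simp
      rw [hnot]
      exact (ssubset_iff_subset_not_subset).symm
end

section
/- Let C be a Hilbert calculus whose set of theorems Thm(C) is computably enumerable, and suppose there is a sequence (Mᵢ) of finite-valued matrices, given by a recursive procedure (so that the relation {(i, A) : Mᵢ ⊨ A} is decidable), such that Thm(C) = ⋂ᵢ Taut(Mᵢ). Then Thm(C) is decidable. Equivalently, if C is undecidable then C has no sequential approximation. -/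
variable {C : Type} {ar : C → ℕ}

/-- A concrete numerical encoding of formulas. -/
def encF [Encodable C] : Fml C ar → ℕ
  | .var n => Nat.pair 0 n
  | .app c f =>
      Nat.pair 1 (Nat.pair (Encodable.encode c)
        (Encodable.encode (List.ofFn fun i => encF (f i))))


/-- simple lookup in a table, foldr form -/
def lkp (tbl : List (ℕ × ℕ)) (m : ℕ) : Option ℕ :=
  tbl.foldr (fun q r => if q.1 = m then some q.2 else r) none

lemma decode_listN_encode (t : ℕ) (l : List ℕ)
    (h : Encodable.decode (α := List ℕ) t = some l) : Encodable.encode l = t := by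
  rw [Denumerable.decode_eq_ofNat] at h
  cases h
  exact Denumerable.encode_ofNat t

lemma mem_lt_encode {l : List ℕ} {m : ℕ} (h : m ∈ l) : m < Encodable.encode l := by
  induction l with
  | nil => cases h
  | cons a l ih =>
    rcases List.mem_cons.1 h with rfl | h
    · simp only [Encodable.encode_list_cons, Encodable.encode_nat]
      exact Nat.lt_succ_of_le (Nat.left_le_pair _ _)
    · simp only [Encodable.encode_list_cons, Encodable.encode_nat]
      exact lt_of_lt_of_le (ih h) (le_trans (Nat.right_le_pair _ _) (Nat.le_succ _))

def valid (tbl : List (ℕ × ℕ)) (x : ℕ) : Bool :=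
  if x.unpair.1 = 1 then
    match hl : Encodable.decode (α := List ℕ) x.unpair.2.unpair.2 with
    | none => false
    | some l =>
      match lkp tbl x.unpair.2.unpair.1 with
      | none => false
      | some k => (l.length == k) && l.attach.all (fun m => valid tbl m.1)
  else x.unpair.1 == 0
termination_by x
decreasing_by
  have h1 : (m : ℕ) < Encodable.encode l := mem_lt_encode m.2
  rw [decode_listN_encode _ _ hl] at h1
  exact lt_of_lt_of_le h1 (le_trans (Nat.unpair_right_le _) (Nat.unpair_right_le _))

lemma getD_range_map (f : ℕ → Bool) {m n : ℕ} (h : m < n) :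
    ((List.range n).map f).getD m false = f m := by
  rw [List.getD_eq_getElem _ _ (by simpa using h)]
  simp [h]

def gvalid (tbl : List (ℕ × ℕ)) (h : List Bool) : Bool :=
  if h.length.unpair.1 = 1 then
    Option.casesOn (Encodable.decode (α := List ℕ) h.length.unpair.2.unpair.2) false
      (fun l => Option.casesOn (lkp tbl h.length.unpair.2.unpair.1) false
        (fun k => (l.length == k) && l.foldr (fun m s => h.getD m false && s) true))
  else h.length.unpair.1 == 0

lemma gvalid_spec (tbl : List (ℕ × ℕ)) (n : ℕ) :
    gvalid tbl ((List.range n).map (valid tbl)) = valid tbl n := by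
  have hlen : ((List.range n).map (valid tbl)).length = n := by simp
  rw [valid, gvalid, hlen]
  split
  · rcases hd : Encodable.decode (α := List ℕ) n.unpair.2.unpair.2 with _ | l
    · rfl
    rcases lkp tbl n.unpair.2.unpair.1 with _ | k
    · rfl
    dsimp only
    have key : ∀ m ∈ l, ((List.range n).map (valid tbl)).getD m false = valid tbl m := by
      intro m hm
      have h1 : m < n := by
        have := mem_lt_encode hm
        rw [decode_listN_encode _ _ hd] at this
        exact lt_of_lt_of_le this (le_trans (Nat.unpair_right_le _) (Nat.unpair_right_le _))
      exact getD_range_map _ h1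
    congr 1
    have h1 : ∀ (L : List ℕ), (∀ m ∈ L, m ∈ l) →
        (L.foldr (fun m s => ((List.range n).map (valid tbl)).getD m false && s) true
          = L.attach.all (fun m => valid tbl m.1)) := by
      intro L
      induction L with
      | nil => intro _; rfl
      | cons a L ih =>
        intro hL
        simp only [List.foldr_cons, List.attach_cons, List.all_cons, List.all_map]
        rw [key a (hL a List.mem_cons_self), ih (fun m hm => hL m (List.mem_cons_of_mem _ hm))]
        congr 1
    exact h1 l (fun _ h => h)
  · rfl

lemma lkp_primrec (tbl : List (ℕ × ℕ)) : Primrec (lkp tbl) := by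
  have hh : Primrec₂ fun (m : ℕ) (qr : (ℕ × ℕ) × Option ℕ) =>
      if qr.1.1 = m then some qr.1.2 else qr.2 :=
    Primrec.ite (Primrec.eq.comp (Primrec.fst.comp (Primrec.fst.comp Primrec.snd)) Primrec.fst)
      (Primrec.option_some.comp (Primrec.snd.comp (Primrec.fst.comp Primrec.snd)))
      (Primrec.snd.comp Primrec.snd)
  exact Primrec.list_foldr (Primrec.const tbl) (Primrec.const none) hh

lemma gvalid_primrec (tbl : List (ℕ × ℕ)) : Primrec (gvalid tbl) := by
  have hlen : Primrec fun h : List Bool => h.length := Primrec.list_length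
  have hx : Primrec fun h : List Bool => h.length.unpair := Primrec.unpair.comp hlen
  have hx1 : Primrec fun h : List Bool => h.length.unpair.1 := Primrec.fst.comp hx
  have hx2u : Primrec fun h : List Bool => h.length.unpair.2.unpair :=
    Primrec.unpair.comp (Primrec.snd.comp hx)
  have hx21 : Primrec fun h : List Bool => h.length.unpair.2.unpair.1 := Primrec.fst.comp hx2u
  have hx22 : Primrec fun h : List Bool => h.length.unpair.2.unpair.2 := Primrec.snd.comp hx2u
  have hdec : Primrec fun h : List Bool =>
      Encodable.decode (α := List ℕ) h.length.unpair.2.unpair.2 := Primrec.decode.comp hx22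
  have hfold : Primrec fun q : (List Bool × List ℕ) × ℕ =>
      q.1.2.foldr (fun m s => q.1.1.getD m false && s) true := by
    have hh : Primrec₂ fun (q : (List Bool × List ℕ) × ℕ) (bs : ℕ × Bool) =>
        q.1.1.getD bs.1 false && bs.2 :=
      (Primrec.dom_bool₂ (· && ·)).comp
        ((Primrec.list_getD false).comp
          (Primrec.fst.comp (Primrec.fst.comp Primrec.fst)) (Primrec.fst.comp Primrec.snd))
        (Primrec.snd.comp Primrec.snd)
    exact Primrec.list_foldr (Primrec.snd.comp Primrec.fst) (Primrec.const true) hh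
  have hinner2 : Primrec fun q : (List Bool × List ℕ) × ℕ =>
      (q.1.2.length == q.2) && q.1.2.foldr (fun m s => q.1.1.getD m false && s) true :=
    (Primrec.dom_bool₂ (· && ·)).comp
      (Primrec.beq.comp (Primrec.list_length.comp (Primrec.snd.comp Primrec.fst)) Primrec.snd)
      hfold
  have hmid : Primrec fun p : List Bool × List ℕ =>
      (Option.casesOn (lkp tbl p.1.length.unpair.2.unpair.1) false
        (fun k => (p.2.length == k) && p.2.foldr (fun m s => p.1.getD m false && s) true) : Bool) :=
    Primrec.option_casesOn ((lkp_primrec tbl).comp (hx21.comp Primrec.fst))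
      (Primrec.const false) hinner2.to₂
  have hthen : Primrec fun h : List Bool =>
      (Option.casesOn (Encodable.decode (α := List ℕ) h.length.unpair.2.unpair.2) false
        (fun l => Option.casesOn (lkp tbl h.length.unpair.2.unpair.1) false
          (fun k => (l.length == k) && l.foldr (fun m s => h.getD m false && s) true)) : Bool) :=
    Primrec.option_casesOn hdec (Primrec.const false) hmid.to₂
  have := Primrec.ite (Primrec.eq.comp hx1 (Primrec.const 1)) hthen
    (Primrec.beq.comp hx1 (Primrec.const 0))
  exact this.of_eq fun h => rfl

lemma valid_primrec (tbl : List (ℕ × ℕ)) : Primrec (valid tbl) := by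
  have hg : Primrec₂ fun (_ : Unit) (h : List Bool) => (some (gvalid tbl h) : Option Bool) :=
    (Primrec.option_some.comp ((gvalid_primrec tbl).comp Primrec.snd)).to₂
  have := Primrec.nat_strong_rec (fun _ : Unit => valid tbl) hg
    (fun _ n => congrArg some (gvalid_spec tbl n))
  exact this.comp (Primrec.const ()) Primrec.id

lemma valid_eq (tbl : List (ℕ × ℕ)) (x : ℕ) :
    valid tbl x =
      if x.unpair.1 = 1 then
        (Option.casesOn (Encodable.decode (α := List ℕ) x.unpair.2.unpair.2) false
          (fun l => Option.casesOn (lkp tbl x.unpair.2.unpair.1) false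
            (fun k => (l.length == k) && l.attach.all (fun m => valid tbl m.1))) : Bool)
      else x.unpair.1 == 0 := by
  rw [valid]
  by_cases h1 : x.unpair.1 = 1
  · rw [if_pos h1, if_pos h1]
    rcases hd : Encodable.decode (α := List ℕ) x.unpair.2.unpair.2 with _ | l
    · rfl
    rcases lkp tbl x.unpair.2.unpair.1 with _ | k <;> rfl
  · rw [if_neg h1, if_neg h1]

section FmlAux

variable [Fintype C] [DecidableEq C] [Encodable C]

noncomputable def tblOf (C : Type) (ar : C → ℕ) [Fintype C] [Encodable C] : List (ℕ × ℕ) :=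
  (Finset.univ : Finset C).toList.map fun c => (Encodable.encode c, ar c)

lemma lkp_cons (q : ℕ × ℕ) (t : List (ℕ × ℕ)) (m : ℕ) :
    lkp (q :: t) m = if q.1 = m then some q.2 else lkp t m := rfl

lemma lkp_tblOf (c : C) : lkp (tblOf C ar) (Encodable.encode c) = some (ar c) := by
  have key : ∀ L : List C, c ∈ L →
      lkp (L.map fun a => (Encodable.encode a, ar a)) (Encodable.encode c) = some (ar c) := by
    intro L
    induction L with
    | nil => intro h; cases h
    | cons a L ih =>
      intro h
      rw [List.map_cons, lkp_cons]
      by_cases hac : Encodable.encode a = Encodable.encode c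
      · obtain rfl : a = c := Encodable.encode_injective hac
        simp
      · rw [if_neg hac]
        refine ih ?_
        rcases List.mem_cons.1 h with rfl | h
        · exact absurd rfl hac
        · exact h
  exact key _ (by simp)

lemma lkp_tblOf_some {m k : ℕ} (h : lkp (tblOf C ar) m = some k) :
    ∃ c : C, Encodable.encode c = m ∧ ar c = k := by
  have key : ∀ L : List C, lkp (L.map fun a => (Encodable.encode a, ar a)) m = some k →
      ∃ c : C, Encodable.encode c = m ∧ ar c = k := by
    intro L
    induction L with
    | nil => intro h; simp [lkp] at h
    | cons a L ih =>
      intro h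
      rw [List.map_cons, lkp_cons] at h
      by_cases ham : Encodable.encode a = m
      · rw [if_pos ham] at h
        exact ⟨a, ham, by simpa using h⟩
      · rw [if_neg ham] at h
        exact ih h
  exact key _ h

lemma valid_encF (A : Fml C ar) : valid (tblOf C ar) (encF A) = true := by
  induction A with
  | var n =>
    rw [valid_eq]
    simp [encF, Nat.unpair_pair]
  | app c f ih =>
    rw [valid_eq, encF]
    simp only [Nat.unpair_pair]
    simp only [if_true, Encodable.encodek, lkp_tblOf, List.length_ofFn, beq_self_eq_true,
      Bool.true_and, List.all_eq_true, List.mem_attach, forall_true_left, if_pos]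
    rintro ⟨m, hm⟩
    obtain ⟨i, rfl⟩ := List.mem_ofFn.1 hm
    exact ih i

lemma valid_sound : ∀ x : ℕ, valid (tblOf C ar) x = true → ∃ A : Fml C ar, encF A = x := by
  intro x
  induction x using Nat.strong_induction_on with
  | _ x ih =>
    intro hv
    rw [valid_eq] at hv
    by_cases h1 : x.unpair.1 = 1
    · rw [if_pos h1] at hv
      rcases hd : Encodable.decode (α := List ℕ) x.unpair.2.unpair.2 with _ | l
      · rw [hd] at hv; exact absurd hv (by simp)
      rw [hd] at hv
      rcases hk : lkp (tblOf C ar) x.unpair.2.unpair.1 with _ | k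
      · rw [hk] at hv; exact absurd hv (by simp)
      rw [hk] at hv
      simp only [Bool.and_eq_true, beq_iff_eq, List.all_eq_true, List.mem_attach,
        forall_true_left] at hv
      obtain ⟨hlen, hall⟩ := hv
      obtain ⟨c, hc, hck⟩ := lkp_tblOf_some hk
      have hx22 : Encodable.encode l = x.unpair.2.unpair.2 := decode_listN_encode _ _ hd
      have hmem : ∀ m ∈ l, ∃ A : Fml C ar, encF A = m := by
        intro m hm
        refine ih m ?_ (hall ⟨m, hm⟩)
        have := mem_lt_encode hm
        rw [hx22] at this
        exact lt_of_lt_of_le this (le_trans (Nat.unpair_right_le _) (Nat.unpair_right_le _))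
      have hlc : l.length = ar c := by rw [hlen, hck]
      choose B hB using fun i : Fin (ar c) => hmem (l.get (Fin.cast hlc.symm i)) (l.get_mem _)
      refine ⟨Fml.app c B, ?_⟩
      have hofn : (List.ofFn fun i => encF (B i)) = l := by
        have h2 : (List.ofFn fun i : Fin (ar c) => l.get (Fin.cast hlc.symm i)) = l := by
          apply List.ext_getElem (by simp [hlc])
          intro j hj1 hj2
          simp [List.getElem_ofFn]
        rw [← h2]
        exact congrArg List.ofFn (funext hB)
      rw [encF, hofn, hc, hx22, Nat.pair_unpair ((Nat.unpair x).2), ← h1]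
      exact Nat.pair_unpair x
    · rw [if_neg h1] at hv
      have h0 : x.unpair.1 = 0 := by simpa using hv
      exact ⟨Fml.var x.unpair.2, by rw [encF, ← h0]; exact Nat.pair_unpair x⟩

end FmlAux

/-- Proposition 5.3 (contrapositive form): if `Thm(C)` is computably
enumerable and there is a recursively given sequence of finite-valued matrices
(i.e. the relation `{(i, A) : Mᵢ ⊨ A}` is decidable) whose tautologies
intersect to `Thm(C)`, then `Thm(C)` is decidable.  Equivalently, an
undecidable calculus has no sequential approximation. -/
theorem decidable_of_sequential_approximation
    [Fintype C] [DecidableEq C] [Encodable C] (K : Calc C ar)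
    (M : ℕ → Mat C ar) (hfin : ∀ i, Finite (M i).V)
    (henum : ∃ e : ℕ → Bool, Computable e ∧
      ∀ A : Fml C ar, (Thm K A ↔ ∃ n, e (Nat.pair n (encF A)) = true))
    (hdec : ∃ d : ℕ → Bool, Computable d ∧
      ∀ (i : ℕ) (A : Fml C ar), (d (Nat.pair i (encF A)) = true ↔ A ∈ (M i).Taut))
    (hint : {A : Fml C ar | Thm K A} = ⋂ i, (M i).Taut) :
    ∃ f : ℕ → Bool, Computable f ∧
      ∀ A : Fml C ar, (f (encF A) = true ↔ Thm K A) := by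
  obtain ⟨e, he, hee⟩ := henum
  obtain ⟨d, hd, hdd⟩ := hdec
  set T := tblOf C ar with hT
  have hvp : Primrec (valid T) := valid_primrec T
  set p : ℕ → ℕ → Bool := fun x n => (e (Nat.pair n x) || !d (Nat.pair n x)) || !valid T x
    with hp
  have hpair : Computable fun q : ℕ × ℕ => Nat.pair q.2 q.1 :=
    (Primrec₂.natPair.comp Primrec.snd Primrec.fst).to_comp
  have hpc : Computable₂ p := by
    have h1 : Computable fun q : ℕ × ℕ => e (Nat.pair q.2 q.1) := he.comp hpair
    have h2 : Computable fun q : ℕ × ℕ => d (Nat.pair q.2 q.1) := hd.comp hpair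
    have h3 : Computable fun q : ℕ × ℕ => valid T q.1 := (hvp.comp Primrec.fst).to_comp
    have hor : Computable₂ (· || ·) := (Primrec.dom_bool₂ (· || ·)).to_comp
    have hnot : Computable (! ·) := (Primrec.dom_bool (! ·)).to_comp
    exact (hor.comp (hor.comp h1 (hnot.comp h2)) (hnot.comp h3)).to₂
  have htot : ∀ x, ∃ n, p x n = true := by
    intro x
    by_cases hvx : valid T x = true
    · obtain ⟨A, rfl⟩ := valid_sound x hvx
      by_cases hA : Thm K A
      · obtain ⟨n, hn⟩ := (hee A).1 hA
        exact ⟨n, by simp [hp, hn]⟩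
      · have hA' : A ∉ ⋂ i, (M i).Taut := by rw [← hint]; exact hA
        rw [Set.mem_iInter] at hA'
        push_neg at hA'
        obtain ⟨i, hi⟩ := hA'
        have hdi : d (Nat.pair i (encF A)) = false := by
          rw [← Bool.not_eq_true]
          intro hcon
          exact hi ((hdd i A).1 hcon)
        exact ⟨i, by simp [hp, hdi]⟩
    · exact ⟨0, by simp [hp, hvx]⟩
  refine ⟨fun x => e (Nat.pair (Nat.find (htot x)) x), ?_, ?_⟩
  · have hrf : Partrec fun x : ℕ => Nat.rfind (p x : ℕ →. Bool) := Partrec.rfind hpc.partrec₂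
    have hmap : Partrec fun x : ℕ =>
        (Nat.rfind (p x : ℕ →. Bool)).map fun n => e (Nat.pair n x) :=
      hrf.map (he.comp hpair).to₂
    apply Partrec.of_eq_tot hmap
    intro x
    refine Part.mem_map _ ?_
    rw [Nat.mem_rfind]
    constructor
    · simp [Nat.find_spec (htot x)]
    · intro m hm
      have h1 := Nat.find_min (htot x) hm
      have h2 : p x m = false := by simpa using h1
      simp [h2]
  · intro A
    constructor
    · intro hfa
      exact (hee A).2 ⟨Nat.find (htot (encF A)), hfa⟩
    · intro hA
      have hvx : valid T (encF A) = true := valid_encF A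
      have hspec := Nat.find_spec (htot (encF A))
      have hdi : d (Nat.pair (Nat.find (htot (encF A))) (encF A)) = true := by
        apply (hdd _ A).2
        have hmem : A ∈ {B : Fml C ar | Thm K B} := hA
        rw [hint] at hmem
        exact Set.mem_iInter.1 hmem _
      show e (Nat.pair (Nat.find (htot (encF A))) (encF A)) = true
      obtain ⟨n0, hn0⟩ : ∃ n0, Nat.find (htot (encF A)) = n0 := ⟨_, rfl⟩
      rw [hn0] at hspec hdi ⊢
      simp only [hp] at hspec
      rw [hdi, hvx] at hspec
      simpa using hspec
end
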